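/- (Iterated untangling.) Let n ≥ 1, t ≥ 1, s = 2t, and let r: {1,…,2s} → {1,…,n} be injective. Then there exist unitaries V_0, V_1, …, V_t on H = ℂ^{n+1} ⊗ (ℂ²)^{⊗(s+1)} and a function σ: {0,1}^n → {+1,−1} such that for every x ∈ {0,1}^n and all signs ε, δ ∈ {+1,−1}: V_t (O_x⊗I) V_{t−1} (O_x⊗I) ⋯ V_1 (O_x⊗I) V_0 β_0 = σ(x) · β_f, where β_0 = (1/√2)[ ε · e_0 ⊗ e_0 ⊗ (⊗_{i=1}^{s} e_{x_{r(i)}}) + δ · e_0 ⊗ e_1 ⊗ (⊗_{i=1}^{s} e_{x_{r(s+i)}}) ] and β_f = (1/√2)( ε · e_0 ⊗ e_0 + δ · e_0 ⊗ e_1 ) ⊗ (⊗_{i=1}^{t} ( e_{x_{r(2i)}} ⊗ e_{x_{r(s+2i)}} )). In particular, the final state is a tensor product (unentangled) state, reached using t oracle queries. -/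
import Mathlib


open Matrix

/-- Index type for the Hilbert space `ℂ^{n+1} ⊗ (ℂ²)^{⊗ m}`:
a query-register basis index in `Fin (n+1)` together with the
computational-basis values of `m` work qubits. -/
abbrev QIdx (n m : ℕ) : Type := Fin (n + 1) × (Fin m → ZMod 2)

/-- The phase oracle `O_x ⊗ I`: `e_0 ↦ e_0` and `e_i ↦ (−1)^{x_i} e_i`
for `1 ≤ i ≤ n`, acting as identity on the work qubits. -/
noncomputable def oracleMat (n m : ℕ) (x : Fin n → ZMod 2) :
    Matrix (QIdx n m) (QIdx n m) ℂ :=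
  Matrix.diagonal fun p =>
    if h : (p.1 : ℕ) = 0 then 1
    else (-1 : ℂ) ^ (x ⟨(p.1 : ℕ) - 1, by have := p.1.isLt; omega⟩).val

/-- The total evolution `U_T (O_x⊗I) U_{T−1} (O_x⊗I) ⋯ U_1 (O_x⊗I) U_0`
of a `T`-query algorithm. -/
noncomputable def algMat (n m : ℕ) (x : Fin n → ZMod 2) :
    (T : ℕ) → (Fin (T + 1) → Matrix (QIdx n m) (QIdx n m) ℂ) →
      Matrix (QIdx n m) (QIdx n m) ℂ
  | 0, U => U 0
  | T + 1, U => U (Fin.last (T + 1)) * oracleMat n m x *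
      algMat n m x T fun i => U i.castSucc

/-- The initial state `e_0 ⊗ e_0^{⊗ m}`. -/
noncomputable def initVec (n m : ℕ) : QIdx n m → ℂ :=
  fun p => if p = ((0 : Fin (n + 1)), fun _ => (0 : ZMod 2)) then 1 else 0

/-- The final state `ψ_x` of the algorithm on input `x`. -/
noncomputable def finalState (n m T : ℕ)
    (U : Fin (T + 1) → Matrix (QIdx n m) (QIdx n m) ℂ)
    (x : Fin n → ZMod 2) : QIdx n m → ℂ :=
  (algMat n m x T U).mulVec (initVec n m)

/-- There is a `T`-query exact quantum algorithm with `m` work qubits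
computing `f`: unitaries `U_0, …, U_T` and an orthogonal projection `Π`
with `Π ψ_x = ψ_x` when `f x = 1` and `Π ψ_x = 0` when `f x = 0`. -/
def ComputesExactly (n m T : ℕ) (f : (Fin n → ZMod 2) → ZMod 2) : Prop :=
  ∃ U : Fin (T + 1) → Matrix (QIdx n m) (QIdx n m) ℂ,
    (∀ i, U i ∈ Matrix.unitaryGroup (QIdx n m) ℂ) ∧
    ∃ P : Matrix (QIdx n m) (QIdx n m) ℂ,
      P.IsHermitian ∧ P * P = P ∧
        ∀ x : Fin n → ZMod 2,
          (f x = 1 → P.mulVec (finalState n m T U x) = finalState n m T U x) ∧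
          (f x = 0 → P.mulVec (finalState n m T U x) = 0)

/-- The standard basis vector of `ℂ^{n+1} ⊗ (ℂ²)^{⊗m}` at index `p0`. -/
noncomputable def bv (n m : ℕ) (p0 : QIdx n m) : QIdx n m → ℂ :=
  fun p => if p = p0 then 1 else 0

section Aux

variable {n m : ℕ}

lemma zmod2_cases (z : ZMod 2) : z = 0 ∨ z = 1 := by revert z; decide

/-- Signed permutation matrix. -/
noncomputable def sperm (n m : ℕ) (π : Equiv.Perm (QIdx n m)) (φ : QIdx n m → ℂ) :
    Matrix (QIdx n m) (QIdx n m) ℂ :=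
  Matrix.of fun q p => if q = π p then φ p else 0

lemma sperm_mem (π : Equiv.Perm (QIdx n m)) (φ : QIdx n m → ℂ)
    (hφ : ∀ p, φ p = 1 ∨ φ p = -1) :
    sperm n m π φ ∈ Matrix.unitaryGroup (QIdx n m) ℂ := by
  rw [Matrix.mem_unitaryGroup_iff]
  ext a b
  simp only [Matrix.mul_apply, Matrix.one_apply, sperm, Matrix.star_apply,
    Matrix.of_apply, Matrix.conjTranspose_apply]
  rw [Finset.sum_eq_single (π.symm a)]
  · rcases hφ (π.symm a) with h | h <;>
      simp [h, Equiv.apply_symm_apply, eq_comm (a := a) (b := b)] <;>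
    · split <;> simp [star_trivial]
  · intro c _ hc
    have : a ≠ π c := by
      intro h; exact hc (by simp [h])
    simp [this]
  · simp

lemma sperm_mulVec_bv (π : Equiv.Perm (QIdx n m)) (φ : QIdx n m → ℂ) (p : QIdx n m) :
    (sperm n m π φ).mulVec (bv n m p) = φ p • bv n m (π p) := by
  funext q
  simp only [Matrix.mulVec, dotProduct, sperm, bv, Matrix.of_apply, Pi.smul_apply,
    smul_eq_mul, mul_ite, mul_one, mul_zero]
  rw [Finset.sum_eq_single p]
  · by_cases hq : q = π p <;> simp [bv, hq]
  · intro c _ hc; simp [hc]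
  · simp

/-- Hadamard on work qubit `j`. -/
noncomputable def Hmat (n m : ℕ) (j : Fin m) : Matrix (QIdx n m) (QIdx n m) ℂ :=
  Matrix.of fun a b =>
    if a.1 = b.1 ∧ Function.update a.2 j 0 = Function.update b.2 j 0
    then (Real.sqrt 2 : ℂ)⁻¹ * (-1 : ℂ) ^ (a.2 j * b.2 j).val else 0

lemma eq_update_iff' (w w' : Fin m → ZMod 2) (j : Fin m) (z : ZMod 2) :
    w = Function.update w' j z ↔
      (Function.update w j 0 = Function.update w' j 0 ∧ w j = z) := by
  constructor
  · rintro rfl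
    simp [Function.update_idem]
  · rintro ⟨h1, h2⟩
    funext i
    by_cases hij : i = j
    · subst hij; simpa using h2
    · have := congrFun h1 i
      simpa [Function.update_of_ne hij] using this

lemma sqrt2_inv_mul_self : ((Real.sqrt 2 : ℂ))⁻¹ * ((Real.sqrt 2 : ℂ))⁻¹ = 2⁻¹ := by
  rw [← mul_inv]
  norm_cast
  rw [Real.mul_self_sqrt (by norm_num)]
  norm_num

lemma Hmat_mem (j : Fin m) : Hmat n m j ∈ Matrix.unitaryGroup (QIdx n m) ℂ := by
  have hsymm : star (Hmat n m j) = Hmat n m j := by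
    ext a b
    simp only [Matrix.star_apply, Matrix.conjTranspose_apply, Hmat, Matrix.of_apply]
    by_cases h : a.1 = b.1 ∧ Function.update a.2 j 0 = Function.update b.2 j 0
    · rw [if_pos ⟨h.1.symm, h.2.symm⟩, if_pos h, mul_comm (b.2 j)]
      simp [star_mul', star_pow, Complex.star_def, map_inv₀, Complex.conj_ofReal]
    · rw [if_neg (fun hh => h ⟨hh.1.symm, hh.2.symm⟩), if_neg h]
      simp
  rw [Matrix.mem_unitaryGroup_iff, hsymm]
  ext a b
  simp only [Matrix.mul_apply, Matrix.one_apply]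
  by_cases hab : a.1 = b.1 ∧ Function.update a.2 j 0 = Function.update b.2 j 0
  · -- sum over the two middle states
    have hsum : ∀ c : QIdx n m,
        c ∉ ({(a.1, Function.update a.2 j 0), (a.1, Function.update a.2 j 1)} :
          Finset (QIdx n m)) → Hmat n m j a c * Hmat n m j c b = 0 := by
      intro c hc
      rw [Finset.mem_insert, Finset.mem_singleton] at hc
      push_neg at hc
      have : ¬ (a.1 = c.1 ∧ Function.update a.2 j 0 = Function.update c.2 j 0) := by
        rintro ⟨h1, h2⟩
        rcases zmod2_cases (c.2 j) with hz | hz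
        · exact hc.1 (by
            ext : 1
            · exact h1.symm
            · exact ((eq_update_iff' c.2 a.2 j 0).2 ⟨h2.symm, hz⟩) )
        · exact hc.2 (by
            ext : 1
            · exact h1.symm
            · exact ((eq_update_iff' c.2 a.2 j 1).2 ⟨h2.symm, hz⟩) )
      simp only [Hmat, Matrix.of_apply, if_neg this, zero_mul]
    rw [← Finset.sum_subset (Finset.subset_univ _) (fun c _ hc => hsum c hc)]
    have hne : ((a.1, Function.update a.2 j 0) : QIdx n m) ≠ (a.1, Function.update a.2 j 1) := by
      intro h
      have := congrFun (congrArg Prod.snd h) j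
      simp at this
    rw [Finset.sum_pair hne]
    have e1 : (Hmat n m j a (a.1, Function.update a.2 j 0)) =
        (Real.sqrt 2 : ℂ)⁻¹ := by
      simp [Hmat, Function.update_idem]
    have e2 : (Hmat n m j a (a.1, Function.update a.2 j 1)) =
        (Real.sqrt 2 : ℂ)⁻¹ * (-1 : ℂ) ^ (a.2 j).val := by
      simp [Hmat, Function.update_idem, mul_one]
    have e3 : (Hmat n m j (a.1, Function.update a.2 j 0) b) =
        (Real.sqrt 2 : ℂ)⁻¹ := by
      simp [Hmat, Function.update_idem, hab.1, hab.2]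
    have e4 : (Hmat n m j (a.1, Function.update a.2 j 1) b) =
        (Real.sqrt 2 : ℂ)⁻¹ * (-1 : ℂ) ^ (b.2 j).val := by
      simp [Hmat, Function.update_idem, hab.1, hab.2, one_mul]
    rw [e1, e2, e3, e4]
    have hv1 : ((1 : ZMod 2)).val = 1 := rfl
    have hu := sqrt2_inv_mul_self
    rcases zmod2_cases (a.2 j) with ha | ha <;> rcases zmod2_cases (b.2 j) with hb | hb
    · have hbe : a = b := by
        ext : 1
        · exact hab.1
        · funext i
          by_cases hij : i = j
          · subst hij; rw [ha, hb]
          · have := congrFun hab.2 i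
            simpa [Function.update_of_ne hij] using this
      rw [if_pos hbe]
      simp only [ha, hb, ZMod.val_zero, pow_zero, mul_one]
      linear_combination 2 * hu
    · have hbe : ¬ a = b := by
        intro h; rw [h, hb] at ha; exact absurd ha (by decide)
      rw [if_neg hbe]
      simp only [ha, hb, ZMod.val_zero, hv1, pow_zero, pow_one, mul_one]
      ring
    · have hbe : ¬ a = b := by
        intro h; rw [h, hb] at ha; exact absurd ha (by decide)
      rw [if_neg hbe]
      simp only [ha, hb, ZMod.val_zero, hv1, pow_zero, pow_one, mul_one]
      ring
    · have hbe : a = b := by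
        ext : 1
        · exact hab.1
        · funext i
          by_cases hij : i = j
          · subst hij; rw [ha, hb]
          · have := congrFun hab.2 i
            simpa [Function.update_of_ne hij] using this
      rw [if_pos hbe]
      simp only [ha, hb, hv1, pow_one]
      linear_combination 2 * hu
  · have hz : ∀ c : QIdx n m, Hmat n m j a c * Hmat n m j c b = 0 := by
      intro c
      by_cases h1 : a.1 = c.1 ∧ Function.update a.2 j 0 = Function.update c.2 j 0
      · by_cases h2 : c.1 = b.1 ∧ Function.update c.2 j 0 = Function.update b.2 j 0
        · exact absurd ⟨h1.1.trans h2.1, h1.2.trans h2.2⟩ hab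
        · simp [Hmat, if_neg h2]
      · simp [Hmat, if_neg h1]
    have : ¬ a = b := by rintro rfl; exact hab ⟨rfl, rfl⟩
    simp [Finset.sum_congr rfl (fun c _ => hz c), this]

lemma Hmat_mulVec_bv (j : Fin m) (p : QIdx n m) :
    (Hmat n m j).mulVec (bv n m p) =
      (Real.sqrt 2 : ℂ)⁻¹ •
        (bv n m (p.1, Function.update p.2 j 0) +
          ((-1 : ℂ) ^ (p.2 j).val) • bv n m (p.1, Function.update p.2 j 1)) := by
  funext q
  simp only [Matrix.mulVec, dotProduct, bv, mul_ite, mul_one, mul_zero]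
  rw [Finset.sum_eq_single p]
  · simp only [if_pos rfl, Hmat, Matrix.of_apply, Pi.smul_apply, Pi.add_apply,
      smul_eq_mul]
    by_cases h : q.1 = p.1 ∧ Function.update q.2 j 0 = Function.update p.2 j 0
    · rw [if_pos h]
      have hne01 : ((p.1, Function.update p.2 j 0) : QIdx n m) ≠
          (p.1, Function.update p.2 j 1) := by
        intro hh
        have := congrFun (congrArg Prod.snd hh) j
        simp at this
      rcases zmod2_cases (q.2 j) with hq | hq
      · have hq0 : q = (p.1, Function.update p.2 j 0) := by
          ext : 1
          · exact h.1
          · exact (eq_update_iff' q.2 p.2 j 0).2 ⟨h.2, hq⟩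
        subst hq0
        simp [bv, hq, hne01]
      · have hq1 : q = (p.1, Function.update p.2 j 1) := by
          ext : 1
          · exact h.1
          · exact (eq_update_iff' q.2 p.2 j 1).2 ⟨h.2, hq⟩
        subst hq1
        simp [bv, hq, Ne.symm hne01]
    · rw [if_neg h]
      have hq0 : q ≠ (p.1, Function.update p.2 j 0) := by
        rintro rfl
        exact h ⟨rfl, by simp [Function.update_idem]⟩
      have hq1 : q ≠ (p.1, Function.update p.2 j 1) := by
        rintro rfl
        exact h ⟨rfl, by simp [Function.update_idem]⟩
      simp [bv, hq0, hq1]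
  · intro c _ hc; simp [hc]
  · simp

lemma oracle_mulVec_bv (x : Fin n → ZMod 2) (p : QIdx n m) :
    (oracleMat n m x).mulVec (bv n m p) =
      (if h : (p.1 : ℕ) = 0 then 1
        else (-1 : ℂ) ^ (x ⟨(p.1 : ℕ) - 1, by have := p.1.isLt; omega⟩).val) •
        bv n m p := by
  funext q
  rw [oracleMat, Matrix.mulVec_diagonal]
  simp only [bv, Pi.smul_apply, smul_eq_mul, mul_ite, mul_one, mul_zero]
  split
  · next h => subst h; rfl
  · simp

/-- Running an algorithm along a trajectory of states. -/
lemma algMat_run (x : Fin n → ZMod 2) (T : ℕ)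
    (U : Fin (T + 1) → Matrix (QIdx n m) (QIdx n m) ℂ)
    (ψ : ℕ → QIdx n m → ℂ)
    (h0 : (U 0).mulVec (ψ 0) = ψ 1)
    (hstep : ∀ (k : ℕ) (_ : k < T), (U ⟨k + 1, by omega⟩).mulVec
        ((oracleMat n m x).mulVec (ψ (k + 1))) = ψ (k + 2)) :
    (algMat n m x T U).mulVec (ψ 0) = ψ (T + 1) := by
  induction T with
  | zero => exact h0
  | succ T ih =>
    rw [algMat, ← Matrix.mulVec_mulVec, ← Matrix.mulVec_mulVec]
    rw [ih (fun i => U i.castSucc) (by simpa using h0)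
      (fun k hk => by
        have : ((⟨k + 1, by omega⟩ : Fin (T + 1)).castSucc : Fin (T + 2)) =
          ⟨k + 1, by omega⟩ := rfl
        simpa [this] using hstep k (by omega))]
    have : (U (Fin.last (T + 1))) = U ⟨T + 1, by omega⟩ := rfl
    rw [this]
    exact hstep T (by omega)

end Aux

section Gadget

variable (n t : ℕ) (r : Fin (4 * t) → Fin n) (x : Fin n → ZMod 2)

/-- The qubit pattern: qubit 0 holds `c`; qubits `1 ≤ j ≤ 2k` hold the
"untangled" final bits; qubits `j > 2k` hold the initial bits of branch `c`. -/
def patI (k : ℕ) (c : ZMod 2) : Fin (2 * t + 1) → ZMod 2 := fun j =>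
  if hj : (j : ℕ) = 0 then c
  else if (j : ℕ) ≤ 2 * k then
    (if (j : ℕ) % 2 = 1 then x (r ⟨(j : ℕ), by have := j.isLt; omega⟩)
      else x (r ⟨2 * t + (j : ℕ) - 1, by have := j.isLt; omega⟩))
  else
    (if c = 0 then x (r ⟨(j : ℕ) - 1, by have := j.isLt; omega⟩)
      else x (r ⟨2 * t + (j : ℕ) - 1, by have := j.isLt; omega⟩))

def z0 : Fin (2 * t + 1) := ⟨0, by omega⟩

def p1 (k : Fin t) : Fin (2 * t + 1) := ⟨2 * (k : ℕ) + 1, by have := k.isLt; omega⟩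

def p2 (k : Fin t) : Fin (2 * t + 1) := ⟨2 * (k : ℕ) + 2, by have := k.isLt; omega⟩

def ia1 (k : Fin t) : Fin (4 * t) := ⟨2 * (k : ℕ), by have := k.isLt; omega⟩
def ia2 (k : Fin t) : Fin (4 * t) := ⟨2 * (k : ℕ) + 1, by have := k.isLt; omega⟩
def ib1 (k : Fin t) : Fin (4 * t) := ⟨2 * t + 2 * (k : ℕ), by have := k.isLt; omega⟩
def ib2 (k : Fin t) : Fin (4 * t) := ⟨2 * t + 2 * (k : ℕ) + 1, by have := k.isLt; omega⟩

/-- Which oracle index to query, as a function of the control qubit and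
the qubit `p2 k`. -/
def tgt (k : Fin t) (w : Fin (2 * t + 1) → ZMod 2) : Fin n :=
  if w (z0 t) = 0 then (if w (p2 t k) = 0 then r (ib2 t k) else r (ia1 t k))
  else (if w (p2 t k) = 0 then r (ia2 t k) else r (ib1 t k))

lemma swapF_inv (k : Fin t) : Function.Involutive
    (fun p : QIdx n (2 * t + 1) =>
      ((p.1, fun i => p.2 (Equiv.swap (p1 t k) (p2 t k) i)) : QIdx n (2 * t + 1))) := by
  intro p; simp

def swapPerm (k : Fin t) : Equiv.Perm (QIdx n (2 * t + 1)) :=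
  (swapF_inv n t k).toPerm _

lemma z0_ne_p1 (k : Fin t) : z0 t ≠ p1 t k := by
  intro h; have := congrArg Fin.val h; simp [z0, p1] at this

lemma z0_ne_p2 (k : Fin t) : z0 t ≠ p2 t k := by
  intro h; have := congrArg Fin.val h; simp [z0, p2] at this

lemma p1_ne_p2 (k : Fin t) : p1 t k ≠ p2 t k := by
  intro h; have := congrArg Fin.val h; simp [p1, p2] at this

lemma cswapF_inv (k : Fin t) : Function.Involutive
    (fun p : QIdx n (2 * t + 1) =>
      ((p.1, fun i => if p.2 (z0 t) = 1 then p.2 (Equiv.swap (p1 t k) (p2 t k) i)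
        else p.2 i) : QIdx n (2 * t + 1))) := by
  intro p
  have hz : Equiv.swap (p1 t k) (p2 t k) (z0 t) = z0 t :=
    Equiv.swap_apply_of_ne_of_ne (z0_ne_p1 t k) (z0_ne_p2 t k)
  by_cases h : p.2 (z0 t) = 1 <;> simp [h, hz]

def cswapPerm (k : Fin t) : Equiv.Perm (QIdx n (2 * t + 1)) :=
  (cswapF_inv n t k).toPerm _

lemma chanF_inv (k : Fin t) : Function.Involutive
    (fun p : QIdx n (2 * t + 1) =>
      ((Equiv.swap (0 : Fin (n + 1)) (Fin.succ (tgt n t r k p.2)) p.1, p.2) :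
        QIdx n (2 * t + 1))) := by
  intro p; simp

def chanPerm (k : Fin t) : Equiv.Perm (QIdx n (2 * t + 1)) :=
  (chanF_inv n t r k).toPerm _

noncomputable def Amat (k : Fin t) : Matrix (QIdx n (2 * t + 1)) (QIdx n (2 * t + 1)) ℂ :=
  sperm n (2 * t + 1) (chanPerm n t r k) (fun _ => 1) *
    Hmat n (2 * t + 1) (p2 t k) *
      sperm n (2 * t + 1) (swapPerm n t k) (fun _ => 1)

noncomputable def Bmat (k : Fin t) : Matrix (QIdx n (2 * t + 1)) (QIdx n (2 * t + 1)) ℂ :=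
  sperm n (2 * t + 1) (cswapPerm n t k) (fun _ => 1) *
    sperm n (2 * t + 1) (Equiv.refl _) (fun p => (-1 : ℂ) ^ (p.2 (p2 t k)).val) *
      Hmat n (2 * t + 1) (p2 t k) *
        sperm n (2 * t + 1) (chanPerm n t r k) (fun _ => 1)

lemma Amat_mem (k : Fin t) : Amat n t r k ∈ Matrix.unitaryGroup (QIdx n (2 * t + 1)) ℂ :=
  mul_mem (mul_mem (sperm_mem _ _ (fun _ => Or.inl rfl)) (Hmat_mem _))
    (sperm_mem _ _ (fun _ => Or.inl rfl))

lemma Bmat_mem (k : Fin t) : Bmat n t r k ∈ Matrix.unitaryGroup (QIdx n (2 * t + 1)) ℂ :=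
  mul_mem (mul_mem (mul_mem (sperm_mem _ _ (fun _ => Or.inl rfl))
    (sperm_mem _ _ (fun p => by
      rcases Nat.even_or_odd ((p.2 (p2 t k)).val) with h | h
      · exact Or.inl (Even.neg_one_pow h)
      · exact Or.inr (Odd.neg_one_pow h))))
    (Hmat_mem _)) (sperm_mem _ _ (fun _ => Or.inl rfl))

noncomputable def sVec (k : ℕ) (ε δ : ℂ) : QIdx n (2 * t + 1) → ℂ :=
  (Real.sqrt 2 : ℂ)⁻¹ •
    (ε • bv n (2 * t + 1) (0, patI n t r x k 0) +
      δ • bv n (2 * t + 1) (0, patI n t r x k 1))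

/-- Work-qubit pattern inside the gadget for pair `k`, branch `c`,
with qubit `p2 k` set to `u`. -/
def wmid (k : Fin t) (c u : ZMod 2) : Fin (2 * t + 1) → ZMod 2 :=
  Function.update
    (fun i => patI n t r x k c (Equiv.swap (p1 t k) (p2 t k) i)) (p2 t k) u

noncomputable def midVec (k : Fin t) (ε δ : ℂ) : QIdx n (2 * t + 1) → ℂ :=
  (Real.sqrt 2 : ℂ)⁻¹ •
    (ε • ((Real.sqrt 2 : ℂ)⁻¹ •
        (bv n (2 * t + 1) (Fin.succ (r (ib2 t k)), wmid n t r x k 0 0) +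
          ((-1 : ℂ) ^ (x (r (ia1 t k))).val) •
            bv n (2 * t + 1) (Fin.succ (r (ia1 t k)), wmid n t r x k 0 1))) +
      δ • ((Real.sqrt 2 : ℂ)⁻¹ •
        (bv n (2 * t + 1) (Fin.succ (r (ia2 t k)), wmid n t r x k 1 0) +
          ((-1 : ℂ) ^ (x (r (ib1 t k))).val) •
            bv n (2 * t + 1) (Fin.succ (r (ib1 t k)), wmid n t r x k 1 1))))

lemma swapPerm_apply (k : Fin t) (p : QIdx n (2 * t + 1)) :
    swapPerm n t k p = (p.1, fun i => p.2 (Equiv.swap (p1 t k) (p2 t k) i)) := rfl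

lemma cswapPerm_apply (k : Fin t) (p : QIdx n (2 * t + 1)) :
    cswapPerm n t k p = (p.1, fun i => if p.2 (z0 t) = 1 then
      p.2 (Equiv.swap (p1 t k) (p2 t k) i) else p.2 i) := rfl

lemma chanPerm_apply (k : Fin t) (p : QIdx n (2 * t + 1)) :
    chanPerm n t r k p = (Equiv.swap (0 : Fin (n + 1)) (Fin.succ (tgt n t r k p.2)) p.1, p.2) := rfl

lemma swap_z0 (k : Fin t) : Equiv.swap (p1 t k) (p2 t k) (z0 t) = z0 t :=
  Equiv.swap_apply_of_ne_of_ne (z0_ne_p1 t k) (z0_ne_p2 t k)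

lemma patI_z0 (k : ℕ) (c : ZMod 2) : patI n t r x k c (z0 t) = c := by
  simp [patI, z0]

lemma patI_p1 (k : Fin t) (c : ZMod 2) :
    patI n t r x (k : ℕ) c (p1 t k) =
      if c = 0 then x (r (ia1 t k)) else x (r (ib1 t k)) := by
  have hv : ((p1 t k).val) = 2 * (k : ℕ) + 1 := rfl
  have e1 : (⟨2 * (k : ℕ) + 1 - 1, by have := k.isLt; omega⟩ : Fin (4 * t)) = ia1 t k :=
    by apply Fin.ext; show 2 * (k : ℕ) + 1 - 1 = 2 * (k : ℕ); omega
  have e2 : (⟨2 * t + (2 * (k : ℕ) + 1) - 1, by have := k.isLt; omega⟩ : Fin (4 * t)) =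
      ib1 t k := by
    apply Fin.ext; show 2 * t + (2 * (k : ℕ) + 1) - 1 = 2 * t + 2 * (k : ℕ); omega
  simp only [patI, hv]
  rw [dif_neg (by omega), if_neg (by omega), e1, e2]

lemma patI_p2 (k : Fin t) (c : ZMod 2) :
    patI n t r x (k : ℕ) c (p2 t k) =
      if c = 0 then x (r (ia2 t k)) else x (r (ib2 t k)) := by
  have hv : ((p2 t k).val) = 2 * (k : ℕ) + 2 := rfl
  have e1 : (⟨2 * (k : ℕ) + 2 - 1, by have := k.isLt; omega⟩ : Fin (4 * t)) = ia2 t k :=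
    by apply Fin.ext; show 2 * (k : ℕ) + 2 - 1 = 2 * (k : ℕ) + 1; omega
  have e2 : (⟨2 * t + (2 * (k : ℕ) + 2) - 1, by have := k.isLt; omega⟩ : Fin (4 * t)) =
      ib2 t k := by
    apply Fin.ext; show 2 * t + (2 * (k : ℕ) + 2) - 1 = 2 * t + 2 * (k : ℕ) + 1; omega
  simp only [patI, hv]
  rw [dif_neg (by omega), if_neg (by omega), e1, e2]

lemma wmid_z0 (k : Fin t) (c u : ZMod 2) : wmid n t r x k c u (z0 t) = c := by
  rw [wmid, Function.update_of_ne (z0_ne_p2 t k), swap_z0, patI_z0]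

lemma wmid_p2 (k : Fin t) (c u : ZMod 2) : wmid n t r x k c u (p2 t k) = u := by
  rw [wmid, Function.update_self]

lemma tgt_wmid (k : Fin t) (c u : ZMod 2) :
    tgt n t r k (wmid n t r x k c u) =
      if c = 0 then (if u = 0 then r (ib2 t k) else r (ia1 t k))
      else (if u = 0 then r (ia2 t k) else r (ib1 t k)) := by
  rw [tgt, wmid_z0, wmid_p2]

lemma wmid_def (k : Fin t) (c u : ZMod 2) :
    Function.update
      (fun i => patI n t r x (k : ℕ) c (Equiv.swap (p1 t k) (p2 t k) i)) (p2 t k) u =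
    wmid n t r x k c u := rfl

lemma L1 (k : Fin t) (ε δ : ℂ) :
    (Amat n t r k).mulVec (sVec n t r x (k : ℕ) ε δ) = midVec n t r x k ε δ := by
  have h10 : ¬ (1 : ZMod 2) = 0 := by decide
  rw [Amat, sVec, ← Matrix.mulVec_mulVec, ← Matrix.mulVec_mulVec]
  simp only [Matrix.mulVec_smul, Matrix.mulVec_add, sperm_mulVec_bv, one_smul,
    swapPerm_apply, Hmat_mulVec_bv, chanPerm_apply]
  simp only [wmid_def, tgt_wmid, Equiv.swap_apply_left, Equiv.swap_apply_right,
    patI_p1, h10, if_true, if_false, eq_self_iff_true, midVec]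

lemma wmid_update (k : Fin t) (c u z : ZMod 2) :
    Function.update (wmid n t r x k c u) (p2 t k) z = wmid n t r x k c z := by
  rw [wmid, wmid, Function.update_idem]

lemma oracle_mulVec_bv_succ (v : Fin n) (m : ℕ) (w : Fin m → ZMod 2) :
    (oracleMat n m x).mulVec (bv n m (Fin.succ v, w)) =
      ((-1 : ℂ) ^ ((x v).val)) • bv n m (Fin.succ v, w) := by
  rw [oracle_mulVec_bv]
  have hv : ((Fin.succ v : Fin (n + 1)) : ℕ) = (v : ℕ) + 1 := Fin.val_succ v
  rw [dif_neg (by rw [hv]; omega)]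
  have e : (⟨((Fin.succ v : Fin (n + 1)) : ℕ) - 1,
      by have := (Fin.succ v).isLt; omega⟩ : Fin n) = v := Fin.ext (by simp)
  rw [e]

lemma patI_succ_p1 (k : Fin t) (c : ZMod 2) :
    patI n t r x ((k : ℕ) + 1) c (p1 t k) = x (r (ia2 t k)) := by
  have hv : ((p1 t k).val) = 2 * (k : ℕ) + 1 := rfl
  have e1 : (⟨2 * (k : ℕ) + 1, by have := k.isLt; omega⟩ : Fin (4 * t)) = ia2 t k :=
    Fin.ext rfl
  simp only [patI, hv]
  rw [dif_neg (by omega), if_pos (by omega), if_pos (by omega), e1]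

lemma patI_succ_p2 (k : Fin t) (c : ZMod 2) :
    patI n t r x ((k : ℕ) + 1) c (p2 t k) = x (r (ib2 t k)) := by
  have hv : ((p2 t k).val) = 2 * (k : ℕ) + 2 := rfl
  have e2 : (⟨2 * t + (2 * (k : ℕ) + 2) - 1, by have := k.isLt; omega⟩ : Fin (4 * t)) =
      ib2 t k := by
    apply Fin.ext; show 2 * t + (2 * (k : ℕ) + 2) - 1 = 2 * t + 2 * (k : ℕ) + 1; omega
  simp only [patI, hv]
  rw [dif_neg (by omega), if_pos (by omega), if_neg (by omega), e2]

lemma patI_succ_other (k : Fin t) (c : ZMod 2) (i : Fin (2 * t + 1))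
    (h1 : i ≠ p1 t k) (h2 : i ≠ p2 t k) :
    patI n t r x ((k : ℕ) + 1) c i = patI n t r x (k : ℕ) c i := by
  have v1 : (i : ℕ) ≠ 2 * (k : ℕ) + 1 := fun h => h1 (Fin.ext h)
  have v2 : (i : ℕ) ≠ 2 * (k : ℕ) + 2 := fun h => h2 (Fin.ext h)
  by_cases hi : (i : ℕ) = 0
  · simp only [patI, dif_pos hi]
  · simp only [patI, dif_neg hi]
    by_cases h2k : (i : ℕ) ≤ 2 * (k : ℕ)
    · rw [if_pos (by omega), if_pos h2k]
    · rw [if_neg (by omega), if_neg h2k]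

lemma patP1 (k : Fin t) (v : ZMod 2) (hv : v = x (r (ib2 t k))) :
    wmid n t r x k 0 v = patI n t r x ((k : ℕ) + 1) 0 := by
  funext i
  by_cases hi2 : i = p2 t k
  · subst hi2
    rw [wmid_p2, patI_succ_p2, hv]
  · by_cases hi1 : i = p1 t k
    · subst hi1
      rw [wmid, Function.update_of_ne (p1_ne_p2 t k), patI_succ_p1]
      have : Equiv.swap (p1 t k) (p2 t k) (p1 t k) = p2 t k := Equiv.swap_apply_left _ _
      rw [this, patI_p2]
      simp
    · rw [wmid, Function.update_of_ne hi2,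
        patI_succ_other n t r x k 0 i hi1 hi2]
      have : Equiv.swap (p1 t k) (p2 t k) i = i :=
        Equiv.swap_apply_of_ne_of_ne hi1 hi2
      rw [this]

lemma patP2 (k : Fin t) (v : ZMod 2) (hv : v = x (r (ia2 t k))) :
    (fun i => wmid n t r x k 1 v (Equiv.swap (p1 t k) (p2 t k) i)) =
      patI n t r x ((k : ℕ) + 1) 1 := by
  funext i
  by_cases hi1 : i = p1 t k
  · subst hi1
    have : Equiv.swap (p1 t k) (p2 t k) (p1 t k) = p2 t k := Equiv.swap_apply_left _ _
    rw [this, wmid_p2, patI_succ_p1, hv]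
  · by_cases hi2 : i = p2 t k
    · subst hi2
      have : Equiv.swap (p1 t k) (p2 t k) (p2 t k) = p1 t k := Equiv.swap_apply_right _ _
      rw [this, wmid, Function.update_of_ne (p1_ne_p2 t k), patI_succ_p2]
      have h2 : Equiv.swap (p1 t k) (p2 t k) (p1 t k) = p2 t k := Equiv.swap_apply_left _ _
      rw [h2, patI_p2]
      simp [(by decide : ¬(1 : ZMod 2) = 0)]
    · have : Equiv.swap (p1 t k) (p2 t k) i = i :=
        Equiv.swap_apply_of_ne_of_ne hi1 hi2
      rw [this, wmid, Function.update_of_ne hi2,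
        patI_succ_other n t r x k 1 i hi1 hi2, this]

lemma L2 (k : Fin t) (ε δ : ℂ) :
    (Bmat n t r k).mulVec ((oracleMat n (2 * t + 1) x).mulVec (midVec n t r x k ε δ))
      = sVec n t r x ((k : ℕ) + 1) ε δ := by
  have h10 : ¬(1 : ZMod 2) = 0 := by decide
  have h01 : ¬(0 : ZMod 2) = 1 := by decide
  rw [Bmat, midVec, ← Matrix.mulVec_mulVec, ← Matrix.mulVec_mulVec, ← Matrix.mulVec_mulVec]
  simp only [Matrix.mulVec_smul, Matrix.mulVec_add, oracle_mulVec_bv_succ,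
    sperm_mulVec_bv, one_smul, chanPerm_apply, tgt_wmid, h10, h01, if_true, if_false,
    ite_true, ite_false, eq_self_iff_true, Equiv.swap_apply_right, Hmat_mulVec_bv,
    wmid_p2, wmid_update, Equiv.refl_apply, cswapPerm_apply, wmid_z0]
  have hu := sqrt2_inv_mul_self
  have v0 : ZMod.val (0 : ZMod 2) = 0 := rfl
  have v1 : ZMod.val (1 : ZMod 2) = 1 := rfl
  rw [sVec, ← patP1 n t r x k (x (r (ib2 t k))) rfl, ← patP2 n t r x k (x (r (ia2 t k))) rfl]
  rcases zmod2_cases (x (r (ia1 t k))) with hA | hA <;>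
    rcases zmod2_cases (x (r (ib2 t k))) with hB | hB <;>
      rcases zmod2_cases (x (r (ib1 t k))) with hC | hC <;>
        rcases zmod2_cases (x (r (ia2 t k))) with hD | hD <;>
          · simp only [hA, hB, hC, hD, v0, v1, pow_zero, pow_one, one_smul]
            match_scalars
            all_goals (first | ring1 | (linear_combination (2 * (Real.sqrt 2 : ℂ)⁻¹ * ε) * hu) | (linear_combination (2 * (Real.sqrt 2 : ℂ)⁻¹ * δ) * hu))

lemma main_run (ht : 0 < t) (ε δ : ℂ) :
    (algMat n (2 * t + 1) x t (fun i =>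
      (if h : (i : ℕ) < t then Amat n t r ⟨(i : ℕ), h⟩ else 1) *
        (if h : 0 < (i : ℕ) then Bmat n t r ⟨(i : ℕ) - 1, by have := i.isLt; omega⟩
          else 1))).mulVec (sVec n t r x 0 ε δ) = sVec n t r x t ε δ := by
  set ψ : ℕ → (QIdx n (2 * t + 1) → ℂ) := fun j =>
    if h : 1 ≤ j ∧ j ≤ t then midVec n t r x ⟨j - 1, by omega⟩ ε δ
    else if j = 0 then sVec n t r x 0 ε δ else sVec n t r x t ε δ with hψ
  have hψ0 : ψ 0 = sVec n t r x 0 ε δ := by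
    simp only [hψ]; rw [dif_neg (by omega)]; simp
  have hψlast : ψ (t + 1) = sVec n t r x t ε δ := by
    simp only [hψ]; rw [dif_neg (by omega), if_neg (by omega)]
  have hψmid : ∀ (j : ℕ) (h2 : j < t), ψ (j + 1) = midVec n t r x ⟨j, h2⟩ ε δ := by
    intro j h2
    simp only [hψ]; rw [dif_pos ⟨by omega, by omega⟩]
    exact congrArg (fun a => midVec n t r x a ε δ)
      (Fin.ext (show j + 1 - 1 = j by omega))
  rw [← hψ0, ← hψlast]
  apply algMat_run
  · rw [hψ0, hψmid 0 ht]
    have hv0 : ((0 : Fin (t + 1)) : ℕ) = 0 := rfl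
    simp only [hv0]
    rw [dif_pos ht, dif_neg (by omega), mul_one]
    exact L1 n t r x ⟨0, ht⟩ ε δ
  · intro k hk
    rw [hψmid k hk]
    have hval : ((⟨k + 1, by omega⟩ : Fin (t + 1)) : ℕ) = k + 1 := rfl
    simp only [hval, Nat.add_sub_cancel]
    rw [dif_pos (by omega : 0 < k + 1)]
    by_cases hlt : k + 1 < t
    · rw [dif_pos hlt, ← Matrix.mulVec_mulVec]
      have hB := L2 n t r x ⟨k, hk⟩ ε δ
      rw [hB, hψmid (k + 1) hlt]
      exact L1 n t r x ⟨k + 1, hlt⟩ ε δ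
    · have hkt : k + 1 = t := by omega
      have hψbig : ψ (k + 2) = sVec n t r x t ε δ := by
        simp only [hψ]; rw [dif_neg (by omega), if_neg (by omega)]
      rw [dif_neg hlt, one_mul]
      have hB := L2 n t r x ⟨k, hk⟩ ε δ
      rw [hB, hψbig]
      have : ((⟨k, hk⟩ : Fin t) : ℕ) + 1 = t := by simpa using hkt
      rw [this]

end Gadget

/-- Iterated untangling: with `s = 2t` and `r : {1,…,2s} → {1,…,n}` injective,
there are unitaries `V_0, …, V_t` and a sign function `σ` mapping
`β₀ = (1/√2)(ε e₀ ⊗ e₀ ⊗ (⊗ᵢ e_{x_{r(i)}}) + δ e₀ ⊗ e₁ ⊗ (⊗ᵢ e_{x_{r(s+i)}}))`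
to `σ(x) · β_f`, an unentangled state, using `t` oracle queries. -/
theorem stmt11 (n t : ℕ) (hn : 1 ≤ n) (ht : 1 ≤ t)
    (r : Fin (4 * t) → Fin n) (hr : Function.Injective r) :
    ∃ V : Fin (t + 1) → Matrix (QIdx n (2 * t + 1)) (QIdx n (2 * t + 1)) ℂ,
      (∀ i, V i ∈ Matrix.unitaryGroup (QIdx n (2 * t + 1)) ℂ) ∧
      ∃ σ : (Fin n → ZMod 2) → ℂ, (∀ x, σ x = 1 ∨ σ x = -1) ∧
        ∀ (x : Fin n → ZMod 2) (ε δ : ℂ),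
          (ε = 1 ∨ ε = -1) → (δ = 1 ∨ δ = -1) →
          (algMat n (2 * t + 1) x t V).mulVec
            ((Real.sqrt 2 : ℂ)⁻¹ •
              (ε • bv n (2 * t + 1) (0, fun j =>
                  if (j : ℕ) = 0 then 0
                  else x (r ⟨((j : ℕ) - 1) % (4 * t), Nat.mod_lt _ (by omega)⟩))
                + δ • bv n (2 * t + 1) (0, fun j =>
                  if (j : ℕ) = 0 then 1
                  else x (r ⟨(2 * t + (j : ℕ) - 1) % (4 * t), Nat.mod_lt _ (by omega)⟩))))
          = σ x •
            ((Real.sqrt 2 : ℂ)⁻¹ •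
              (ε • bv n (2 * t + 1) (0, fun j =>
                  if (j : ℕ) = 0 then 0
                  else if (j : ℕ) % 2 = 1 then
                    x (r ⟨(j : ℕ) % (4 * t), Nat.mod_lt _ (by omega)⟩)
                  else
                    x (r ⟨(2 * t + (j : ℕ) - 1) % (4 * t), Nat.mod_lt _ (by omega)⟩))
                + δ • bv n (2 * t + 1) (0, fun j =>
                  if (j : ℕ) = 0 then 1
                  else if (j : ℕ) % 2 = 1 then
                    x (r ⟨(j : ℕ) % (4 * t), Nat.mod_lt _ (by omega)⟩)
                  else
                    x (r ⟨(2 * t + (j : ℕ) - 1) % (4 * t), Nat.mod_lt _ (by omega)⟩)))) := by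
  refine ⟨fun i =>
      (if h : (i : ℕ) < t then Amat n t r ⟨(i : ℕ), h⟩ else 1) *
        (if h : 0 < (i : ℕ) then Bmat n t r ⟨(i : ℕ) - 1, by have := i.isLt; omega⟩
          else 1),
    fun i => ?_, fun _ => 1, fun _ => Or.inl rfl, fun x ε δ _ _ => ?_⟩
  · refine mul_mem ?_ ?_
    · split
      · exact Amat_mem n t r _
      · exact one_mem _
    · split
      · exact Bmat_mem n t r _
      · exact one_mem _
  · have e0 : (fun j : Fin (2 * t + 1) =>
        if (j : ℕ) = 0 then (0 : ZMod 2)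
        else x (r ⟨((j : ℕ) - 1) % (4 * t), Nat.mod_lt _ (by omega)⟩)) =
          patI n t r x 0 0 := by
      funext j
      by_cases hj : (j : ℕ) = 0
      · simp only [patI, hj, if_pos, dif_pos]
      · have hjl := j.isLt
        simp only [patI, dif_neg hj, if_neg hj]
        rw [if_neg (by omega)]
        simp only [if_true]
        exact congrArg (fun i => x (r i))
          (Fin.ext (show ((j : ℕ) - 1) % (4 * t) = (j : ℕ) - 1 from
            Nat.mod_eq_of_lt (by omega)))
    have e1 : (fun j : Fin (2 * t + 1) =>
        if (j : ℕ) = 0 then (1 : ZMod 2)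
        else x (r ⟨(2 * t + (j : ℕ) - 1) % (4 * t), Nat.mod_lt _ (by omega)⟩)) =
          patI n t r x 0 1 := by
      funext j
      by_cases hj : (j : ℕ) = 0
      · simp only [patI, hj, if_pos, dif_pos]
      · have hjl := j.isLt
        simp only [patI, dif_neg hj, if_neg hj]
        rw [if_neg (by omega), if_neg (by decide)]
        exact congrArg (fun i => x (r i))
          (Fin.ext (show (2 * t + (j : ℕ) - 1) % (4 * t) = 2 * t + (j : ℕ) - 1 from
            Nat.mod_eq_of_lt (by omega)))
    have ff : ∀ c : ZMod 2, (fun j : Fin (2 * t + 1) =>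
        if (j : ℕ) = 0 then c
        else if (j : ℕ) % 2 = 1 then
          x (r ⟨(j : ℕ) % (4 * t), Nat.mod_lt _ (by omega)⟩)
        else
          x (r ⟨(2 * t + (j : ℕ) - 1) % (4 * t), Nat.mod_lt _ (by omega)⟩)) =
          patI n t r x t c := by
      intro c
      funext j
      by_cases hj : (j : ℕ) = 0
      · simp only [patI, hj, if_pos, dif_pos]
      · have hjl := j.isLt
        simp only [patI, dif_neg hj, if_neg hj]
        rw [if_pos (show (j : ℕ) ≤ 2 * t by omega)]
        by_cases hp : (j : ℕ) % 2 = 1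
        · rw [if_pos hp, if_pos hp]
          exact congrArg (fun i => x (r i))
            (Fin.ext (show (j : ℕ) % (4 * t) = (j : ℕ) from
              Nat.mod_eq_of_lt (by omega)))
        · rw [if_neg hp, if_neg hp]
          exact congrArg (fun i => x (r i))
            (Fin.ext (show (2 * t + (j : ℕ) - 1) % (4 * t) = 2 * t + (j : ℕ) - 1 from
              Nat.mod_eq_of_lt (by omega)))
    rw [e0, e1, ff 0, ff 1, one_smul]
    exact main_run n t r x ht ε δ
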